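/- Let k, m, ℓ be natural numbers with ℓ ≥ 1, and let H ⊆ [k]^m be a nonempty finite class. Then there exists an ℓ-list orientation σ of the one-inclusion graph G(H) whose maximum ℓ-outdegree is at most ⌈MD^ℓ(H)⌉, the ceiling of the maximum ℓ-density of H. -/

import Mathlib

/-- The edge of the one-inclusion graph of `H` in direction `i` through the vertex `g`:
all `h ∈ H` agreeing with `g` outside coordinate `i`. -/
def edgeOf {m k : ℕ} (H : Finset (Fin m → Fin k)) (i : Fin m) (g : Fin m → Fin k) :
    Finset (Fin m → Fin k) :=
  H.filter fun h => ∀ j, j ≠ i → h j = g j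

/-- The edges of the one-inclusion graph of `H`, each recorded together with its
direction: for every direction `i` and every vertex `g ∈ H` we get the (nonempty) edge
`e_{i,f}` where `f` is the restriction of `g` to `[m] \ {i}`. -/
def oigEdges {m k : ℕ} (H : Finset (Fin m → Fin k)) :
    Finset (Fin m × Finset (Fin m → Fin k)) :=
  (Finset.univ ×ˢ H).image fun p => (p.1, edgeOf H p.1 p.2)

/-- The shifting average `ℓ`-degree of `H`:
`savd^ℓ(H) = (1/|H|) ∑_{e edge of G(H)} max(|e| - ℓ, 0)`. -/
noncomputable def savd {m k : ℕ} (ℓ : ℕ) (H : Finset (Fin m → Fin k)) : ℝ :=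
  (H.card : ℝ)⁻¹ * ∑ e ∈ oigEdges H, ((e.2.card - ℓ : ℕ) : ℝ)

/-- The `ℓ`-exponential dimension of `H ⊆ [k]^m`: the largest `d` such that for some
coordinates `i_1, …, i_d ∈ [m]` the projection of `H` has at least `(ℓ+1)^d` elements. -/
noncomputable def expDim {m k : ℕ} (ℓ : ℕ) (H : Finset (Fin m → Fin k)) : ℕ :=
  sSup {d : ℕ | ∃ t : Fin d → Fin m,
    (ℓ + 1) ^ d ≤ (H.image fun h => fun j => h (t j)).card}

/-- The maximum `ℓ`-density of `H`: the supremum of the shifting average `ℓ`-degrees of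
all nonempty subclasses `H' ⊆ H`. -/
noncomputable def maxDensity {m k : ℕ} (ℓ : ℕ) (H : Finset (Fin m → Fin k)) : ℝ :=
  sSup {x : ℝ | ∃ H' : Finset (Fin m → Fin k), H' ⊆ H ∧ H'.Nonempty ∧ savd ℓ H' = x}

namespace OIG

variable {m k : ℕ}

lemma edgeOf_subset (H : Finset (Fin m → Fin k)) (i : Fin m) (g : Fin m → Fin k) :
    edgeOf H i g ⊆ H := Finset.filter_subset _ _

lemma self_mem_edgeOf {H : Finset (Fin m → Fin k)} {i : Fin m} {g : Fin m → Fin k}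
    (hg : g ∈ H) : g ∈ edgeOf H i g :=
  Finset.mem_filter.mpr ⟨hg, fun _ _ => rfl⟩

lemma edgeOf_eq_of_mem {H : Finset (Fin m → Fin k)} {i : Fin m} {g h : Fin m → Fin k}
    (hh : h ∈ edgeOf H i g) : edgeOf H i h = edgeOf H i g := by
  obtain ⟨hH, hagree⟩ := Finset.mem_filter.mp hh
  ext x
  simp only [edgeOf, Finset.mem_filter]
  exact ⟨fun ⟨hx, ha⟩ => ⟨hx, fun j hj => (ha j hj).trans (hagree j hj)⟩,
    fun ⟨hx, ha⟩ => ⟨hx, fun j hj => (ha j hj).trans (hagree j hj).symm⟩⟩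

lemma mem_oigEdges_iff {H : Finset (Fin m → Fin k)} {p : Fin m × Finset (Fin m → Fin k)} :
    p ∈ oigEdges H ↔ ∃ i, ∃ g ∈ H, p = (i, edgeOf H i g) := by
  constructor
  · intro hp
    obtain ⟨q, hq, rfl⟩ := Finset.mem_image.mp hp
    exact ⟨q.1, q.2, (Finset.mem_product.mp hq).2, rfl⟩
  · rintro ⟨i, g, hg, rfl⟩
    exact Finset.mem_image.mpr ⟨(i, g), Finset.mem_product.mpr ⟨Finset.mem_univ _, hg⟩, rfl⟩

lemma snd_subset_of_mem {H : Finset (Fin m → Fin k)} {p : Fin m × Finset (Fin m → Fin k)}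
    (hp : p ∈ oigEdges H) : p.2 ⊆ H := by
  obtain ⟨i, g, hg, rfl⟩ := mem_oigEdges_iff.mp hp
  exact edgeOf_subset H i g

lemma snd_eq_edgeOf {H : Finset (Fin m → Fin k)} {p : Fin m × Finset (Fin m → Fin k)}
    {g : Fin m → Fin k} (hp : p ∈ oigEdges H) (hg : g ∈ p.2) :
    p.2 = edgeOf H p.1 g := by
  obtain ⟨i, g₀, hg₀, rfl⟩ := mem_oigEdges_iff.mp hp
  exact (edgeOf_eq_of_mem hg).symm

lemma oig_eq_of {H : Finset (Fin m → Fin k)} {p q : Fin m × Finset (Fin m → Fin k)}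
    {g : Fin m → Fin k} (hp : p ∈ oigEdges H) (hq : q ∈ oigEdges H)
    (h1 : p.1 = q.1) (hgp : g ∈ p.2) (hgq : g ∈ q.2) : p = q := by
  have h2 := snd_eq_edgeOf hp hgp
  have h3 := snd_eq_edgeOf hq hgq
  exact Prod.ext h1 (by rw [h2, h3, h1])

lemma edgeOf_inter {H V' : Finset (Fin m → Fin k)} (hV' : V' ⊆ H) (i : Fin m)
    (g : Fin m → Fin k) : edgeOf V' i g = edgeOf H i g ∩ V' := by
  ext x
  simp only [edgeOf, Finset.mem_filter, Finset.mem_inter]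
  constructor
  · rintro ⟨hx, ha⟩; exact ⟨⟨hV' hx, ha⟩, hx⟩
  · rintro ⟨⟨_, ha⟩, hx⟩; exact ⟨hx, ha⟩

lemma inter_mem_oigEdges {H V' : Finset (Fin m → Fin k)}
    {p : Fin m × Finset (Fin m → Fin k)} {g : Fin m → Fin k} (hV' : V' ⊆ H)
    (hp : p ∈ oigEdges H) (hg : g ∈ p.2 ∩ V') :
    (p.1, p.2 ∩ V') ∈ oigEdges V' := by
  have hg2 := Finset.mem_inter.mp hg
  have h1 : p.2 = edgeOf H p.1 g := snd_eq_edgeOf hp hg2.1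
  have h2 : p.2 ∩ V' = edgeOf V' p.1 g := by rw [h1, edgeOf_inter hV']
  exact mem_oigEdges_iff.mpr ⟨p.1, g, hg2.2, by rw [h2]⟩

/-- Key structural estimate: the total deficiency of a family of edges of `G(H)`,
measured inside `V' ⊆ H`, is at most the total deficiency of the edges of `G(V')`. -/
lemma key_sum_le {ℓ : ℕ} {H V' : Finset (Fin m → Fin k)} (hV' : V' ⊆ H)
    {E₁ : Finset (Fin m × Finset (Fin m → Fin k))} (hE : ∀ p ∈ E₁, p ∈ oigEdges H) :
    ∑ p ∈ E₁, ((p.2 ∩ V').card - ℓ) ≤ ∑ q ∈ oigEdges V', (q.2.card - ℓ) := by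
  classical
  set E₂ := E₁.filter fun p => (p.2 ∩ V').Nonempty with hE₂
  have hsum : ∑ p ∈ E₁, ((p.2 ∩ V').card - ℓ) = ∑ p ∈ E₂, ((p.2 ∩ V').card - ℓ) := by
    refine (Finset.sum_subset (Finset.filter_subset _ _) ?_).symm
    intro p hp hnp
    have hnone : ¬ (p.2 ∩ V').Nonempty := fun h => hnp (Finset.mem_filter.mpr ⟨hp, h⟩)
    have : p.2 ∩ V' = ∅ := Finset.not_nonempty_iff_eq_empty.mp hnone
    simp [this]
  rw [hsum]
  have hinj : ∀ p ∈ E₂, ∀ q ∈ E₂,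
      (fun p => (p.1, p.2 ∩ V')) p = (fun p => (p.1, p.2 ∩ V')) q → p = q := by
    intro p hp q hq heq
    obtain ⟨hp1, hp2⟩ := Finset.mem_filter.mp hp
    obtain ⟨hq1, _⟩ := Finset.mem_filter.mp hq
    obtain ⟨g, hg⟩ := hp2
    have heq' : (p.1, p.2 ∩ V') = (q.1, q.2 ∩ V') := heq
    have h1 : p.1 = q.1 := (Prod.ext_iff.mp heq').1
    have h2 : p.2 ∩ V' = q.2 ∩ V' := (Prod.ext_iff.mp heq').2
    have hg' : g ∈ q.2 ∩ V' := h2 ▸ hg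
    exact oig_eq_of (hE p hp1) (hE q hq1) h1 (Finset.mem_inter.mp hg).1
      (Finset.mem_inter.mp hg').1
  calc ∑ p ∈ E₂, ((p.2 ∩ V').card - ℓ)
      = ∑ q ∈ E₂.image (fun p => (p.1, p.2 ∩ V')), (q.2.card - ℓ) :=
        (Finset.sum_image (f := fun q : Fin m × Finset (Fin m → Fin k) => q.2.card - ℓ) hinj).symm
    _ ≤ ∑ q ∈ oigEdges V', (q.2.card - ℓ) := by
        refine Finset.sum_le_sum_of_subset ?_
        intro q hq
        obtain ⟨p, hp, rfl⟩ := Finset.mem_image.mp hq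
        obtain ⟨hp1, hp2⟩ := Finset.mem_filter.mp hp
        obtain ⟨g, hg⟩ := hp2
        exact inter_mem_oigEdges hV' (hE p hp1) hg

lemma bddAbove_savdSet (ℓ : ℕ) (H : Finset (Fin m → Fin k)) :
    BddAbove {x : ℝ | ∃ H', H' ⊆ H ∧ H'.Nonempty ∧ savd ℓ H' = x} := by
  refine ⟨(m : ℝ) * H.card, ?_⟩
  rintro x ⟨H', hsub, hne, rfl⟩
  have hc0 : (0:ℝ) < (H'.card : ℝ) := by exact_mod_cast Finset.card_pos.mpr hne
  have hterm : ∀ q ∈ oigEdges H', ((q.2.card - ℓ : ℕ) : ℝ) ≤ (H'.card : ℝ) := by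
    intro q hq
    have h1 : q.2.card - ℓ ≤ H'.card :=
      le_trans (Nat.sub_le _ _) (Finset.card_le_card (snd_subset_of_mem hq))
    exact_mod_cast h1
  have hcard : (oigEdges H').card ≤ m * H'.card := by
    calc (oigEdges H').card ≤ (Finset.univ ×ˢ H').card := Finset.card_image_le
      _ = m * H'.card := by rw [Finset.card_product, Finset.card_univ, Fintype.card_fin]
  have hS : ∑ q ∈ oigEdges H', ((q.2.card - ℓ : ℕ) : ℝ) ≤ (m : ℝ) * H'.card * H'.card := by
    calc ∑ q ∈ oigEdges H', ((q.2.card - ℓ : ℕ) : ℝ)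
        ≤ (oigEdges H').card • (H'.card : ℝ) := Finset.sum_le_card_nsmul _ _ _ hterm
      _ = ((oigEdges H').card : ℝ) * H'.card := nsmul_eq_mul _ _
      _ ≤ ((m * H'.card : ℕ) : ℝ) * H'.card := by
          have : ((oigEdges H').card : ℝ) ≤ ((m * H'.card : ℕ) : ℝ) := by exact_mod_cast hcard
          exact mul_le_mul_of_nonneg_right this (le_of_lt hc0)
      _ = (m : ℝ) * H'.card * H'.card := by push_cast; ring
  have h2 : savd ℓ H' ≤ (m : ℝ) * H'.card := by
    rw [savd]
    have h3 : (H'.card : ℝ)⁻¹ * (∑ q ∈ oigEdges H', ((q.2.card - ℓ : ℕ) : ℝ))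
        ≤ (H'.card : ℝ)⁻¹ * ((m : ℝ) * H'.card * H'.card) :=
      mul_le_mul_of_nonneg_left hS (inv_nonneg.mpr (le_of_lt hc0))
    refine h3.trans (le_of_eq ?_)
    field_simp
  refine h2.trans ?_
  have : (H'.card : ℝ) ≤ (H.card : ℝ) := by exact_mod_cast Finset.card_le_card hsub
  exact mul_le_mul_of_nonneg_left this (by positivity)

lemma density_nat (ℓ : ℕ) (H : Finset (Fin m → Fin k)) (V' : Finset (Fin m → Fin k))
    (hsub : V' ⊆ H) :
    ∑ q ∈ oigEdges V', (q.2.card - ℓ) ≤ ⌈maxDensity ℓ H⌉₊ * V'.card := by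
  rcases V'.eq_empty_or_nonempty with rfl | hne
  · have h : oigEdges (∅ : Finset (Fin m → Fin k)) = ∅ := by simp [oigEdges]
    simp [h]
  · have h1 : savd ℓ V' ≤ maxDensity ℓ H :=
      le_csSup (bddAbove_savdSet ℓ H) ⟨V', hsub, hne, rfl⟩
    have h2 : maxDensity ℓ H ≤ (⌈maxDensity ℓ H⌉₊ : ℝ) := Nat.le_ceil _
    have hc0 : (0:ℝ) < (V'.card : ℝ) := by exact_mod_cast Finset.card_pos.mpr hne
    have hS : ((∑ q ∈ oigEdges V', (q.2.card - ℓ) : ℕ) : ℝ)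
        = (V'.card : ℝ) * savd ℓ V' := by
      rw [savd, ← mul_assoc, mul_inv_cancel₀ (ne_of_gt hc0), one_mul, Nat.cast_sum]
    have h3 : ((∑ q ∈ oigEdges V', (q.2.card - ℓ) : ℕ) : ℝ)
        ≤ ((⌈maxDensity ℓ H⌉₊ * V'.card : ℕ) : ℝ) := by
      rw [hS]
      push_cast
      rw [mul_comm ((⌈maxDensity ℓ H⌉₊ : ℝ)) (V'.card : ℝ)]
      exact mul_le_mul_of_nonneg_left (h1.trans h2) (le_of_lt hc0)
    exact_mod_cast h3

/-- Slots: for each edge `p` of `G(H)`, `p.2.card - ℓ` slots that must be assigned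
distinct charged vertices. -/
abbrev SlotT (ℓ : ℕ) (H : Finset (Fin m → Fin k)) :=
  {q : (Fin m × Finset (Fin m → Fin k)) × ℕ // q.1 ∈ oigEdges H ∧ q.2 + ℓ < q.1.2.card}

/-- Gadget nodes: one for each incidence `(p, v)` with `v ∈ p.2`. -/
abbrev GadT (H : Finset (Fin m → Fin k)) :=
  {q : (Fin m × Finset (Fin m → Fin k)) × (Fin m → Fin k) // q.1 ∈ oigEdges H ∧ q.2 ∈ q.1.2}

/-- Right-hand vertices of the bipartite Hall system. -/
abbrev RT (m k D : ℕ) :=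
  ((Fin m × Finset (Fin m → Fin k)) × (Fin m → Fin k)) ⊕ ((Fin m → Fin k) × Fin D)

/-- Neighborhoods of the bipartite Hall system. -/
def nbr (ℓ D : ℕ) (H : Finset (Fin m → Fin k)) :
    SlotT ℓ H ⊕ GadT H → Finset (RT m k D)
  | Sum.inl s => s.1.1.2.image fun v => Sum.inl (s.1.1, v)
  | Sum.inr g => insert (Sum.inl g.1)
      ((Finset.univ : Finset (Fin D)).image fun t => Sum.inr (g.1.2, t))

lemma hall_cond (ℓ D : ℕ) (H : Finset (Fin m → Fin k))
    (hD : ∀ V' : Finset (Fin m → Fin k), V' ⊆ H →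
      ∑ q ∈ oigEdges V', (q.2.card - ℓ) ≤ D * V'.card)
    (A : Finset (SlotT ℓ H ⊕ GadT H)) :
    A.card ≤ (A.biUnion (nbr ℓ D H)).card := by
  classical
  set N := A.biUnion (nbr ℓ D H) with hN
  set E₁ : Finset (Fin m × Finset (Fin m → Fin k)) := A.toLeft.image (fun x => x.1.1)
    with hE₁def
  set P₂ : Finset ((Fin m × Finset (Fin m → Fin k)) × (Fin m → Fin k)) :=
    A.toRight.image Subtype.val with hP₂def
  set VA : Finset (Fin m → Fin k) := A.toRight.image (fun x => x.1.2) with hVAdef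
  set Q₁ : Finset ((Fin m × Finset (Fin m → Fin k)) × (Fin m → Fin k)) :=
    E₁.biUnion (fun p => p.2.image fun v => (p, v)) with hQ₁def
  have hE₁mem : ∀ p ∈ E₁, p ∈ oigEdges H := by
    intro p hp
    obtain ⟨x, hx, rfl⟩ := Finset.mem_image.mp hp
    exact x.2.1
  have hVAH : VA ⊆ H := by
    intro v hv
    obtain ⟨x, hx, rfl⟩ := Finset.mem_image.mp hv
    exact snd_subset_of_mem x.2.1 x.2.2
  have hsub : ((Q₁ ∪ P₂).image Sum.inl ∪
      VA.biUnion (fun v => (Finset.univ : Finset (Fin D)).image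
        fun t => (Sum.inr (v, t) : RT m k D))) ⊆ N := by
    intro r hr
    rcases Finset.mem_union.mp hr with hr | hr
    · obtain ⟨q, hq, rfl⟩ := Finset.mem_image.mp hr
      rcases Finset.mem_union.mp hq with hq | hq
      · obtain ⟨p, hp, hq2⟩ := Finset.mem_biUnion.mp hq
        obtain ⟨v, hv, rfl⟩ := Finset.mem_image.mp hq2
        obtain ⟨x, hx, hx1⟩ := Finset.mem_image.mp hp
        refine Finset.mem_biUnion.mpr ⟨Sum.inl x, Finset.mem_toLeft.mp hx, ?_⟩
        simp only [nbr]
        exact Finset.mem_image.mpr ⟨v, by rw [hx1]; exact hv, by rw [hx1]⟩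
      · obtain ⟨x, hx, rfl⟩ := Finset.mem_image.mp hq
        refine Finset.mem_biUnion.mpr ⟨Sum.inr x, Finset.mem_toRight.mp hx, ?_⟩
        simp only [nbr]
        exact Finset.mem_insert_self _ _
    · obtain ⟨v, hv, hr2⟩ := Finset.mem_biUnion.mp hr
      obtain ⟨t, _, rfl⟩ := Finset.mem_image.mp hr2
      obtain ⟨x, hx, hx1⟩ := Finset.mem_image.mp hv
      refine Finset.mem_biUnion.mpr ⟨Sum.inr x, Finset.mem_toRight.mp hx, ?_⟩
      simp only [nbr]
      refine Finset.mem_insert.mpr (Or.inr ?_)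
      exact Finset.mem_image.mpr ⟨t, Finset.mem_univ _, by rw [hx1]⟩
  have hA1 : A.toLeft.card ≤ ∑ p ∈ E₁, (p.2.card - ℓ) := by
    have h1 : A.toLeft.image Subtype.val ⊆
        E₁.biUnion (fun p => (Finset.range (p.2.card - ℓ)).image fun j => (p, j)) := by
      intro q hq
      obtain ⟨x, hx, rfl⟩ := Finset.mem_image.mp hq
      refine Finset.mem_biUnion.mpr ⟨x.1.1, Finset.mem_image.mpr ⟨x, hx, rfl⟩, ?_⟩
      refine Finset.mem_image.mpr ⟨x.1.2, Finset.mem_range.mpr ?_, ?_⟩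
      · have := x.2.2; omega
      · exact Prod.mk.eta
    calc A.toLeft.card = (A.toLeft.image Subtype.val).card :=
          (Finset.card_image_of_injective _ Subtype.val_injective).symm
      _ ≤ (E₁.biUnion (fun p => (Finset.range (p.2.card - ℓ)).image fun j => (p, j))).card :=
          Finset.card_le_card h1
      _ ≤ ∑ p ∈ E₁, ((Finset.range (p.2.card - ℓ)).image fun j => (p, j)).card :=
          Finset.card_biUnion_le
      _ ≤ ∑ p ∈ E₁, (p.2.card - ℓ) := Finset.sum_le_sum fun p _ =>
          le_trans Finset.card_image_le (le_of_eq (Finset.card_range _))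
  have hA2 : A.toRight.card = P₂.card :=
    (Finset.card_image_of_injective _ Subtype.val_injective).symm
  have hQ1card : Q₁.card = ∑ p ∈ E₁, p.2.card := by
    rw [hQ₁def, Finset.card_biUnion]
    · exact Finset.sum_congr rfl fun p _ =>
        Finset.card_image_of_injective _ (fun a b h => (Prod.ext_iff.mp h).2)
    · intro p hp q hq hpq
      refine Finset.disjoint_left.mpr ?_
      intro r hr1 hr2
      obtain ⟨v, _, rfl⟩ := Finset.mem_image.mp hr1
      obtain ⟨w, _, h⟩ := Finset.mem_image.mp hr2
      exact hpq ((congrArg Prod.fst h).symm)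
  have hN3card : (VA.biUnion (fun v => (Finset.univ : Finset (Fin D)).image
      fun t => (Sum.inr (v, t) : RT m k D))).card = D * VA.card := by
    rw [Finset.card_biUnion]
    · have h1 : ∀ v ∈ VA, ((Finset.univ : Finset (Fin D)).image
          fun t => (Sum.inr (v, t) : RT m k D)).card = D := by
        intro v _
        rw [Finset.card_image_of_injective _ (fun a b h => by
          simpa using h), Finset.card_univ, Fintype.card_fin]
      rw [Finset.sum_congr rfl h1, Finset.sum_const, smul_eq_mul, mul_comm]
    · intro v hv w hw hvw
      refine Finset.disjoint_left.mpr ?_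
      intro r hr1 hr2
      obtain ⟨t, _, rfl⟩ := Finset.mem_image.mp hr1
      obtain ⟨t', _, h⟩ := Finset.mem_image.mp hr2
      have := Sum.inr.inj h
      exact hvw ((congrArg Prod.fst this).symm)
  have hPQ : (P₂ ∩ Q₁).card ≤ ∑ p ∈ E₁, (p.2 ∩ VA).card := by
    have h1 : P₂ ∩ Q₁ ⊆ E₁.biUnion fun p => (p.2 ∩ VA).image fun v => (p, v) := by
      intro q hq
      obtain ⟨hqP, hqQ⟩ := Finset.mem_inter.mp hq
      obtain ⟨p, hp, hq2⟩ := Finset.mem_biUnion.mp hqQ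
      obtain ⟨v, hv, rfl⟩ := Finset.mem_image.mp hq2
      obtain ⟨x, hx, hxval⟩ := Finset.mem_image.mp hqP
      refine Finset.mem_biUnion.mpr ⟨p, hp, Finset.mem_image.mpr
        ⟨v, Finset.mem_inter.mpr ⟨hv, ?_⟩, rfl⟩⟩
      refine Finset.mem_image.mpr ⟨x, hx, ?_⟩
      exact congrArg Prod.snd hxval
    calc (P₂ ∩ Q₁).card
        ≤ (E₁.biUnion fun p => (p.2 ∩ VA).image fun v => (p, v)).card :=
          Finset.card_le_card h1
      _ ≤ ∑ p ∈ E₁, ((p.2 ∩ VA).image fun v => (p, v)).card := Finset.card_biUnion_le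
      _ ≤ ∑ p ∈ E₁, (p.2 ∩ VA).card := Finset.sum_le_sum fun p _ => Finset.card_image_le
  have hkey : ∑ p ∈ E₁, ((p.2 ∩ VA).card - ℓ) ≤ D * VA.card :=
    le_trans (key_sum_le hVAH hE₁mem) (hD VA hVAH)
  have hterm : ∑ p ∈ E₁, (p.2.card - ℓ) + ∑ p ∈ E₁, (p.2 ∩ VA).card ≤
      ∑ p ∈ E₁, p.2.card + ∑ p ∈ E₁, ((p.2 ∩ VA).card - ℓ) := by
    rw [← Finset.sum_add_distrib, ← Finset.sum_add_distrib]
    refine Finset.sum_le_sum fun p _ => ?_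
    have h := Finset.card_le_card (Finset.inter_subset_left : p.2 ∩ VA ⊆ p.2)
    omega
  have hNbig : (Q₁ ∪ P₂).card + D * VA.card ≤ N.card := by
    have hdisj : Disjoint ((Q₁ ∪ P₂).image (Sum.inl : _ → RT m k D))
        (VA.biUnion fun v => (Finset.univ : Finset (Fin D)).image
          fun t => (Sum.inr (v, t) : RT m k D)) := by
      refine Finset.disjoint_left.mpr ?_
      intro r hr1 hr2
      obtain ⟨q, _, rfl⟩ := Finset.mem_image.mp hr1
      obtain ⟨v, _, hr3⟩ := Finset.mem_biUnion.mp hr2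
      obtain ⟨t, _, h⟩ := Finset.mem_image.mp hr3
      exact absurd h (by simp)
    calc (Q₁ ∪ P₂).card + D * VA.card
        = ((Q₁ ∪ P₂).image (Sum.inl : _ → RT m k D)).card +
          (VA.biUnion fun v => (Finset.univ : Finset (Fin D)).image
            fun t => (Sum.inr (v, t) : RT m k D)).card := by
          rw [Finset.card_image_of_injective _ Sum.inl_injective, hN3card]
      _ = (((Q₁ ∪ P₂).image (Sum.inl : _ → RT m k D)) ∪
          (VA.biUnion fun v => (Finset.univ : Finset (Fin D)).image
            fun t => (Sum.inr (v, t) : RT m k D))).card :=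
          (Finset.card_union_of_disjoint hdisj).symm
      _ ≤ N.card := Finset.card_le_card hsub
  have hQunion : Q₁.card + (P₂ \ Q₁).card ≤ (Q₁ ∪ P₂).card := by
    have h := Finset.card_sdiff_add_card P₂ Q₁
    rw [Finset.union_comm]
    omega
  have hP2split : (P₂ \ Q₁).card + (P₂ ∩ Q₁).card = P₂.card :=
    Finset.card_sdiff_add_card_inter P₂ Q₁
  have hAcard : A.toLeft.card + A.toRight.card = A.card :=
    Finset.card_toLeft_add_card_toRight (u := A)
  omega

end OIG

/-- Every nonempty finite class `H ⊆ [k]^m` admits an `ℓ`-list orientation of its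
one-inclusion graph (each edge `e` is assigned a subset `σ e ⊆ e` of size at most `ℓ`)
whose maximum `ℓ`-outdegree is at most `⌈MD^ℓ(H)⌉`. -/
theorem orientation_outdeg_le_ceil_maxDensity (k m ℓ : ℕ) (hℓ : 1 ≤ ℓ)
    (H : Finset (Fin m → Fin k)) (hne : H.Nonempty) :
    ∃ σ : Fin m × Finset (Fin m → Fin k) → Finset (Fin m → Fin k),
      (∀ e ∈ oigEdges H, σ e ⊆ e.2 ∧ (σ e).card ≤ ℓ) ∧
      ∀ v ∈ H, ((oigEdges H).filter fun e => v ∈ e.2 ∧ v ∉ σ e).card ≤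
        ⌈maxDensity ℓ H⌉₊ := by
  classical
  set D := ⌈maxDensity ℓ H⌉₊ with hDdef
  obtain ⟨f, hfinj, hfmem⟩ :=
    (Finset.all_card_le_biUnion_card_iff_exists_injective (OIG.nbr ℓ D H)).mp
      (OIG.hall_cond ℓ D H (fun V' hV' => OIG.density_nat ℓ H V' hV'))
  set T : Fin m × Finset (Fin m → Fin k) → Finset (Fin m → Fin k) := fun p =>
    p.2.filter fun v => ∃ x : OIG.SlotT ℓ H, x.1.1 = p ∧ f (Sum.inl x) = Sum.inl (p, v)
    with hTdef
  refine ⟨fun p => p.2 \ T p, fun p hp => ⟨Finset.sdiff_subset, ?_⟩, ?_⟩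
  · -- card bound on σ p
    have hTsub : T p ⊆ p.2 := Finset.filter_subset _ _
    have hTcard : p.2.card - ℓ ≤ (T p).card := by
      have hmain : (Finset.range (p.2.card - ℓ)).attach.card ≤
          ((T p).image fun v => (Sum.inl (p, v) : OIG.RT m k D)).card := by
        refine Finset.card_le_card_of_injOn
          (fun j => f (Sum.inl ⟨(p, j.1), ⟨hp, show j.1 + ℓ < p.2.card by
            have h := Finset.mem_range.mp j.2; omega⟩⟩)) ?_ ?_
        · intro j _
          have hm := hfmem (Sum.inl (⟨(p, j.1), ⟨hp, show j.1 + ℓ < p.2.card by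
            have h := Finset.mem_range.mp j.2; omega⟩⟩ : OIG.SlotT ℓ H))
          simp only [OIG.nbr] at hm
          obtain ⟨v, hv, heq⟩ := Finset.mem_image.mp hm
          have hvT : v ∈ T p := Finset.mem_filter.mpr ⟨hv, ⟨⟨(p, j.1), ⟨hp,
            show j.1 + ℓ < p.2.card by
              have h := Finset.mem_range.mp j.2; omega⟩⟩, rfl, heq.symm⟩⟩
          exact Finset.mem_image.mpr ⟨v, hvT, heq⟩
        · intro a _ b _ h
          have h2 := Sum.inl_injective (hfinj h)
          have h3 := congrArg Subtype.val h2
          exact Subtype.ext (congrArg Prod.snd h3)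
      rw [Finset.card_attach, Finset.card_range,
        Finset.card_image_of_injective _ (fun a b h => by simpa using h)] at hmain
      exact hmain
    have h1 : (p.2 \ T p).card = p.2.card - (T p).card := Finset.card_sdiff_of_subset hTsub
    have h2 : (T p).card ≤ p.2.card := Finset.card_le_card hTsub
    simp only []
    omega
  · intro v hv
    have hslot : ∀ p, p ∈ (oigEdges H).filter
        (fun e => v ∈ e.2 ∧ v ∉ (fun p => p.2 \ T p) e) →
        ∃ x : OIG.SlotT ℓ H, x.1.1 = p ∧ f (Sum.inl x) = Sum.inl (p, v) := by
      intro p hp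
      obtain ⟨hp1, hp2, hp3⟩ := Finset.mem_filter.mp hp
      have hvT : v ∈ T p := by
        by_contra h
        exact hp3 (Finset.mem_sdiff.mpr ⟨hp2, h⟩)
      exact (Finset.mem_filter.mp hvT).2
    set F := (oigEdges H).filter (fun e => v ∈ e.2 ∧ v ∉ (fun p => p.2 \ T p) e) with hFdef
    have hmain : F.attach.card ≤ ((Finset.univ : Finset (Fin D)).image
        fun t => (Sum.inr (v, t) : OIG.RT m k D)).card := by
      refine Finset.card_le_card_of_injOn
        (fun x => f (Sum.inr ⟨(x.1, v), ⟨(Finset.mem_filter.mp x.2).1,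
          (Finset.mem_filter.mp x.2).2.1⟩⟩)) ?_ ?_
      · intro x _
        have hm := hfmem (Sum.inr (⟨(x.1, v), ⟨(Finset.mem_filter.mp x.2).1,
          (Finset.mem_filter.mp x.2).2.1⟩⟩ : OIG.GadT H))
        simp only [OIG.nbr] at hm
        rcases Finset.mem_insert.mp hm with h | h
        · exfalso
          obtain ⟨y, hy1, hy2⟩ := hslot x.1 x.2
          have h4 : f (Sum.inl y) = Sum.inl (x.1, v) := hy2
          have h5 := hfinj (h.trans h4.symm)
          cases h5
        · exact h
      · intro a _ b _ h
        have h2 := Sum.inr_injective (hfinj h)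
        have h3 := congrArg Subtype.val h2
        exact Subtype.ext (congrArg Prod.fst h3)
    rw [Finset.card_attach] at hmain
    calc F.card ≤ _ := hmain
      _ = D := by
          rw [Finset.card_image_of_injective _ (fun a b h => by simpa using h),
            Finset.card_univ, Fintype.card_fin]
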